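/- Let P : Ω → ℝ^k and Ñ : Ω → ℝ be independent random variables, where P has a Lebesgue density, Ñ is integrable with a strictly positive, continuously differentiable Lebesgue density p_Ñ, and let f : ℝ^k → ℝ be Borel measurable with f(P) integrable. Set Y := f(P) + Ñ and R := Y − E[Y | σ(P)], and define s(x, y) := p_Ñ'(y − f(x)) / p_Ñ(y − f(x)) (the partial derivative in y of the logarithm of the joint density of (P, Y)). If s(P, Y) is square-integrable, then E[(s(P, Y) − E[s(P, Y) | σ(R)])²] = 0. -/

import Mathlib

open MeasureTheory ProbabilityTheory

/-- In an additive noise model `Y = f(P) + Ñ` with `P ⟂ Ñ`, the conditional score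
`s(P, Y) = p_Ñ'(Y - f(P)) / p_Ñ(Y - f(P))` can be predicted with zero mean-squared error from the
regression residual `R = Y - E[Y | σ(P)]`. -/
theorem stmt_2
    {Ω : Type*} {mΩ : MeasurableSpace Ω}
    (μ : Measure Ω) [IsProbabilityMeasure μ]
    (k : ℕ)
    (P : Ω → (Fin k → ℝ)) (N : Ω → ℝ)
    (hP : Measurable P) (hN : Measurable N)
    (hindep : IndepFun P N μ)
    (pP : (Fin k → ℝ) → ℝ)
    (hPdens : Measure.map P μ = volume.withDensity (fun x => ENNReal.ofReal (pP x)))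
    (hNint : Integrable N μ)
    (pN : ℝ → ℝ) (hpNpos : ∀ t, 0 < pN t) (hpNC1 : ContDiff ℝ 1 pN)
    (hNdens : Measure.map N μ = volume.withDensity (fun t => ENNReal.ofReal (pN t)))
    (f : (Fin k → ℝ) → ℝ) (hf : Measurable f)
    (hfint : Integrable (fun ω => f (P ω)) μ)
    (Y : Ω → ℝ) (hY : Y = fun ω => f (P ω) + N ω)
    (R : Ω → ℝ)
    (hR : R = fun ω => Y ω - (μ[Y | MeasurableSpace.comap P inferInstance]) ω)
    (s : (Fin k → ℝ) → ℝ → ℝ)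
    (hs : ∀ x y, s x y = deriv pN (y - f x) / pN (y - f x))
    (hs2 : MemLp (fun ω => s (P ω) (Y ω)) 2 μ) :
    ∫ ω, (s (P ω) (Y ω)
        - (μ[fun ω => s (P ω) (Y ω) | MeasurableSpace.comap R inferInstance]) ω) ^ 2 ∂μ = 0 := by
  classical
  have hmP : MeasurableSpace.comap P inferInstance ≤ mΩ := hP.comap_le
  have hmN : MeasurableSpace.comap N inferInstance ≤ mΩ := hN.comap_le
  have hYmeas : Measurable Y := by rw [hY]; exact (hf.comp hP).add hN
  have hRmeas : Measurable R := by
    rw [hR]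
    exact hYmeas.sub ((stronglyMeasurable_condExp.mono hmP).measurable)
  have hmR : MeasurableSpace.comap R inferInstance ≤ mΩ := hRmeas.comap_le
  set c : ℝ := ∫ ω, N ω ∂μ with hc
  -- conditional expectation of f (P ω) given σ(P) is itself
  have hPm' : Measurable[MeasurableSpace.comap P inferInstance] P :=
    Measurable.of_comap_le le_rfl
  have hcond1 : μ[(fun ω => f (P ω)) | MeasurableSpace.comap P inferInstance]
      = fun ω => f (P ω) :=
    condExp_of_stronglyMeasurable hmP ((hf.comp hPm').stronglyMeasurable) hfint
  -- conditional expectation of N given σ(P) is constant c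
  have hNm' : Measurable[MeasurableSpace.comap N inferInstance] N :=
    Measurable.of_comap_le le_rfl
  have hcond2 : μ[N | MeasurableSpace.comap P inferInstance] =ᵐ[μ] fun _ => c := by
    have h := condExp_indep_eq (μ := μ) (f := N) hmN hmP hNm'.stronglyMeasurable
      ((IndepFun_iff_Indep N P μ).mp hindep.symm)
    simpa [hc] using h
  -- R = N - c a.e.
  have hYint : Integrable Y μ := by rw [hY]; exact hfint.add hNint
  have hcondY : μ[Y | MeasurableSpace.comap P inferInstance]
      =ᵐ[μ] fun ω => f (P ω) + c := by
    have hadd := condExp_add (μ := μ) (m := MeasurableSpace.comap P inferInstance)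
      hfint hNint
    have hY' : Y = fun ω => f (P ω) + N ω := hY
    calc μ[Y | MeasurableSpace.comap P inferInstance]
        =ᵐ[μ] μ[(fun ω => f (P ω)) | MeasurableSpace.comap P inferInstance]
            + μ[N | MeasurableSpace.comap P inferInstance] := by rw [hY']; exact hadd
      _ =ᵐ[μ] fun ω => f (P ω) + c := by
          filter_upwards [hcond2] with ω hω
          simp [hcond1, hω]
  have hRae : R =ᵐ[μ] fun ω => N ω - c := by
    filter_upwards [hcondY] with ω hω
    have hRω : R ω = Y ω - (μ[Y | MeasurableSpace.comap P inferInstance]) ω := by rw [hR]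
    have hYω : Y ω = f (P ω) + N ω := by rw [hY]
    rw [hRω, hω, hYω]
    ring
  -- the score as a function of R
  set h : ℝ → ℝ := fun t => deriv pN (t + c) / pN (t + c) with hhdef
  have hhmeas : Measurable h := by
    exact ((measurable_deriv pN).comp (measurable_add_const c)).div
      (hpNC1.continuous.measurable.comp (measurable_add_const c))
  have hsN : ∀ ω, s (P ω) (Y ω) = deriv pN (N ω) / pN (N ω) := by
    intro ω
    rw [hs, hY]
    simp
  have hkey : (fun ω => s (P ω) (Y ω)) =ᵐ[μ] fun ω => h (R ω) := by
    filter_upwards [hRae] with ω hω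
    rw [hsN ω, hω]
    simp [hhdef]
  -- integrability
  have hsint : Integrable (fun ω => s (P ω) (Y ω)) μ := hs2.integrable one_le_two
  have hhRint : Integrable (fun ω => h (R ω)) μ := hsint.congr hkey
  -- h ∘ R is σ(R)-measurable
  have hRm' : Measurable[MeasurableSpace.comap R inferInstance] R :=
    Measurable.of_comap_le le_rfl
  have hcondR : μ[(fun ω => h (R ω)) | MeasurableSpace.comap R inferInstance]
      = fun ω => h (R ω) :=
    condExp_of_stronglyMeasurable hmR ((hhmeas.comp hRm').stronglyMeasurable) hhRint
  have hfinal : μ[(fun ω => s (P ω) (Y ω)) | MeasurableSpace.comap R inferInstance]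
      =ᵐ[μ] fun ω => s (P ω) (Y ω) := by
    calc μ[(fun ω => s (P ω) (Y ω)) | MeasurableSpace.comap R inferInstance]
        =ᵐ[μ] μ[(fun ω => h (R ω)) | MeasurableSpace.comap R inferInstance] :=
          condExp_congr_ae hkey
      _ = fun ω => h (R ω) := hcondR
      _ =ᵐ[μ] fun ω => s (P ω) (Y ω) := hkey.symm
  have hzero : (fun ω => (s (P ω) (Y ω)
      - (μ[fun ω => s (P ω) (Y ω) | MeasurableSpace.comap R inferInstance]) ω) ^ 2)
      =ᵐ[μ] fun _ => (0 : ℝ) := by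
    filter_upwards [hfinal] with ω hω
    rw [hω]
    ring
  rw [integral_congr_ae hzero, integral_zero]
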